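/- arXiv:2501.11364 — 5 statements merged into one kernel-verified Lean document; each statement's English description precedes it below -/
import Mathlib

section
/- Let β = (β₁,...,βₙ) with 1 > |β₁| ≥ ... ≥ |βₙ| > 0, and let G^r_β be the set of β sub-resonant polynomial transformations of ℂⁿ. Then G^r_β is closed under composition: if P, P̃ ∈ G^r_β then P̃ ∘ P ∈ G^r_β. -/
open Finset

noncomputable section

/-- `bpow β p = ∏ᵢ βᵢ ^ pᵢ`. -/
def bpow {n : ℕ} (β : Fin n → ℂ) (p : Fin n → ℕ) : ℂ := ∏ i, β i ^ p i

/-- `𝒫ⱼ`: the set of resonances of `βⱼ`, i.e. `p ∈ ℕⁿ` with `βⱼ = β^p` and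
`p ≠ eₖ` for all `k ≥ j`. -/
def resSet {n : ℕ} (β : Fin n → ℂ) (j : Fin n) : Set (Fin n → ℕ) :=
  {p | β j = bpow β p ∧ ∀ k : Fin n, j ≤ k → p ≠ fun i => if i = k then 1 else 0}

/-- `𝒬ⱼ`: the set of nonzero multi-indices componentwise bounded by some
resonance of `βⱼ`. -/
def subResSet {n : ℕ} (β : Fin n → ℂ) (j : Fin n) : Set (Fin n → ℕ) :=
  {q | q ≠ 0 ∧ ∃ p ∈ resSet β j, ∀ l, q l ≤ p l}

/-- A map `P : ℂⁿ → ℂⁿ` is β sub-resonant if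
`P(z) = (a₁z₁, a₂z₂ + P₂(z₁), ..., aₙzₙ + Pₙ(z₁,...,z_{n-1}))` with all `aⱼ ≠ 0`
and each `Pⱼ` a linear combination of monomials `z^q` with `q ∈ 𝒬ⱼ` depending
only on the variables `z₁, ..., z_{j-1}`. -/
def IsSubResonant {n : ℕ} (β : Fin n → ℂ) (P : (Fin n → ℂ) → (Fin n → ℂ)) : Prop :=
  ∃ (a : Fin n → ℂ) (c : Fin n → ((Fin n → ℕ) →₀ ℂ)),
    (∀ j, a j ≠ 0) ∧
    (∀ j q, c j q ≠ 0 → q ∈ subResSet β j ∧ ∀ i, j ≤ i → q i = 0) ∧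
    ∀ (z : Fin n → ℂ) (j : Fin n),
      P z j = a j * z j + (c j).sum fun q coef => coef * ∏ i, z i ^ q i

namespace SubResAux

variable {n : ℕ}

lemma bpow_add (β : Fin n → ℂ) (u v : Fin n → ℕ) :
    bpow β (fun i => u i + v i) = bpow β u * bpow β v := by
  simp [bpow, pow_add, Finset.prod_mul_distrib]

lemma bpow_e (β : Fin n → ℂ) (k : Fin n) :
    bpow β (fun i => if i = k then 1 else 0) = β k := by
  rw [bpow, Finset.prod_eq_single k] <;> simp +contextual

lemma prod_split (M : Type*) [CommMonoid M] (g : Fin n → M) (q q' : Fin n → ℕ) (k : Fin n)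
    (hsplit : ∀ i, q i = q' i + (if i = k then 1 else 0)) :
    (∏ i, g i ^ q i) = (∏ i, g i ^ q' i) * g k := by
  have h1 : ∀ i, g i ^ q i = g i ^ q' i * (if i = k then g i else 1) := by
    intro i
    rw [hsplit i]
    by_cases h : i = k <;> simp [h, pow_add]
  rw [Finset.prod_congr rfl fun i _ => h1 i, Finset.prod_mul_distrib]
  congr 1
  simp

lemma key_prod (β : Fin n → ℂ) (f : Fin n → MvPolynomial (Fin n) ℂ)
    (hf : ∀ i, ∀ r ∈ (f i).support,
      r = Finsupp.single i 1 ∨ ((⇑r : Fin n → ℕ) ∈ subResSet β i ∧ ∀ l, i ≤ l → r l = 0)) :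
    ∀ (m : ℕ) (q : Fin n → ℕ), (∑ i, q i) = m →
    ∀ r ∈ (∏ i, f i ^ q i).support,
      (∃ p' : Fin n → ℕ, (∏ i, β i ^ q i) = bpow β p' ∧ ∀ l, r l ≤ p' l) ∧
      (q ≠ 0 → ∃ l, r l ≠ 0) ∧ (∀ l, r l ≠ 0 → ∃ i, q i ≠ 0 ∧ l ≤ i) := by
  intro m
  induction m with
  | zero =>
    intro q hq r hr
    have hq0 : ∀ i, q i = 0 := by
      intro i
      exact Finset.sum_eq_zero_iff.mp hq i (Finset.mem_univ i)
    have hq0' : q = 0 := funext hq0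
    have hr0 : r = 0 := by
      simp only [hq0, pow_zero, Finset.prod_const_one] at hr
      rw [MvPolynomial.mem_support_iff, MvPolynomial.coeff_one] at hr
      by_contra h
      simp [Ne.symm h] at hr
    refine ⟨⟨q, rfl, ?_⟩, ?_, ?_⟩
    · intro l; simp [hr0]
    · intro h; exact absurd hq0' h
    · intro l hl; simp [hr0] at hl
  | succ m ih =>
    intro q hq r hr
    have hex : ∃ k, q k ≠ 0 := by
      by_contra h
      push_neg at h
      simp [h] at hq
    obtain ⟨k, hk⟩ := hex
    set q' : Fin n → ℕ := Function.update q k (q k - 1) with hq'def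
    have hsplit : ∀ i, q i = q' i + (if i = k then 1 else 0) := by
      intro i
      by_cases h : i = k
      · subst h; simp [q', Function.update_self]; omega
      · simp [q', Function.update_of_ne h, h]
    have hsum' : ∑ i, q' i = m := by
      rw [Finset.sum_congr rfl fun i _ => hsplit i, Finset.sum_add_distrib] at hq
      simp at hq
      omega
    rw [prod_split _ f q q' k hsplit] at hr
    obtain ⟨r1, hr1, r2, hr2, hr12⟩ := Finset.mem_add.mp (MvPolynomial.support_mul _ _ hr)
    obtain ⟨⟨p1, hp1, hle1⟩, _, hsupp1⟩ := ih q' hsum' r1 hr1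
    have hr2' : ∃ p2 : Fin n → ℕ, β k = bpow β p2 ∧ (∀ l, r2 l ≤ p2 l) ∧
        (∃ l, r2 l ≠ 0) ∧ (∀ l, r2 l ≠ 0 → l ≤ k) := by
      rcases hf k r2 hr2 with h | ⟨⟨hne, p2, hp2, hle⟩, hbd⟩
      · refine ⟨fun i => if i = k then 1 else 0, (bpow_e β k).symm, ?_, ⟨k, ?_⟩, ?_⟩
        · intro l
          subst h
          rw [Finsupp.single_apply]
          by_cases hlk : l = k <;> simp [hlk, Ne.symm]
        · subst h; simp
        · intro l hl
          subst h
          rw [Finsupp.single_apply] at hl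
          by_cases hlk : k = l
          · exact le_of_eq hlk.symm
          · simp [hlk] at hl
      · refine ⟨p2, hp2.1, hle, ?_, ?_⟩
        · by_contra h
          push_neg at h
          exact hne (funext h)
        · intro l hl
          by_contra h
          exact hl (hbd l (le_of_not_ge h))
    obtain ⟨p2, hp2, hle2, ⟨l0, hl0⟩, hbd2⟩ := hr2'
    have hq'le : ∀ i, q' i ≤ q i := by
      intro i
      by_cases h : i = k
      · subst h; simp [q', Function.update_self]
      · simp [q', Function.update_of_ne h]
    have hrapp : ∀ l, r l = r1 l + r2 l := by
      intro l; rw [← hr12]; simp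
    refine ⟨⟨fun l => p1 l + p2 l, ?_, ?_⟩, ?_, ?_⟩
    · rw [prod_split _ β q q' k hsplit, hp1, hp2, ← bpow_add]
    · intro l; rw [hrapp l]; exact Nat.add_le_add (hle1 l) (hle2 l)
    · intro _
      exact ⟨l0, by rw [hrapp l0]; omega⟩
    · intro l hl
      rw [hrapp l] at hl
      have hor : r1 l ≠ 0 ∨ r2 l ≠ 0 := by omega
      rcases hor with h1 | h2
      · obtain ⟨i, hqi, hli⟩ := hsupp1 l h1
        refine ⟨i, ?_, hli⟩
        have := hq'le i
        omega
      · exact ⟨k, hk, hbd2 l h2⟩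

end SubResAux

open SubResAux in
/-- `G^r_β` is closed under composition. -/
theorem isSubResonant_comp {n : ℕ} (β : Fin n → ℂ)
    (h1 : ∀ i, ‖β i‖ < 1)
    (hpos : ∀ i, 0 < ‖β i‖)
    (hmono : ∀ i j : Fin n, i ≤ j → ‖β j‖ ≤ ‖β i‖)
    (P Ptilde : (Fin n → ℂ) → (Fin n → ℂ))
    (hP : IsSubResonant β P) (hPtilde : IsSubResonant β Ptilde) :
    IsSubResonant β (Ptilde ∘ P) := by
  classical
  obtain ⟨a, c, ha, hc, hPe⟩ := hP
  obtain ⟨b, ct, hb, hct, hPte⟩ := hPtilde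
  set S : Fin n → MvPolynomial (Fin n) ℂ :=
    fun i => (c i).sum fun q coef =>
      MvPolynomial.monomial (Finsupp.equivFunOnFinite.symm q) coef with hSdef
  set f : Fin n → MvPolynomial (Fin n) ℂ := fun i => a i • MvPolynomial.X i + S i with hfdef
  set T : Fin n → MvPolynomial (Fin n) ℂ :=
    fun j => (ct j).sum fun q coef => coef • ∏ i, f i ^ q i with hTdef
  set G : Fin n → MvPolynomial (Fin n) ℂ := fun j => b j • S j + T j with hGdef
  have hcoe : ∀ (q : Fin n → ℕ) (l : Fin n), (Finsupp.equivFunOnFinite.symm q) l = q l :=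
    fun _ _ => rfl
  have hcoe' : ∀ q : Fin n → ℕ, ⇑(Finsupp.equivFunOnFinite.symm q) = q :=
    fun q => funext fun l => hcoe q l
  have hSsupp : ∀ i, ∀ r ∈ (S i).support,
      ∃ q, c i q ≠ 0 ∧ Finsupp.equivFunOnFinite.symm q = r := by
    intro i r hr
    simp only [hSdef, Finsupp.sum] at hr
    obtain ⟨q, hqmem, hrmem⟩ := Finset.mem_biUnion.mp (MvPolynomial.support_sum hr)
    refine ⟨q, Finsupp.mem_support_iff.mp hqmem, ?_⟩
    rw [MvPolynomial.support_monomial, if_neg (Finsupp.mem_support_iff.mp hqmem)] at hrmem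
    exact (Finset.mem_singleton.mp hrmem).symm
  have hfsupp : ∀ i, ∀ r ∈ (f i).support,
      r = Finsupp.single i 1 ∨
        ((⇑r : Fin n → ℕ) ∈ subResSet β i ∧ ∀ l, i ≤ l → r l = 0) := by
    intro i r hr
    simp only [hfdef] at hr
    rcases Finset.mem_union.mp (MvPolynomial.support_add hr) with h | h
    · left
      have h2 := MvPolynomial.support_smul h
      rwa [MvPolynomial.support_X, Finset.mem_singleton] at h2
    · right
      obtain ⟨q, hq, rfl⟩ := hSsupp i r h
      obtain ⟨h1', h2'⟩ := hc i q hq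
      refine ⟨by rw [hcoe']; exact h1', fun l hl => by rw [hcoe]; exact h2' l hl⟩
  have hevalS : ∀ (z : Fin n → ℂ) i,
      MvPolynomial.eval z (S i) = (c i).sum fun q coef => coef * ∏ l, z l ^ q l := by
    intro z i
    simp only [hSdef]
    rw [Finsupp.sum, map_sum, Finsupp.sum]
    refine Finset.sum_congr rfl fun q _ => ?_
    rw [MvPolynomial.eval_monomial, Finsupp.prod_pow]
    simp only [hcoe]
  have hevalf : ∀ (z : Fin n → ℂ) i, MvPolynomial.eval z (f i) = P z i := by
    intro z i
    simp only [hfdef]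
    rw [map_add, MvPolynomial.smul_eval, MvPolynomial.eval_X, hevalS, hPe]
  have hevalT : ∀ (z : Fin n → ℂ) j,
      MvPolynomial.eval z (T j) = (ct j).sum fun q coef => coef * ∏ i, (P z i) ^ q i := by
    intro z j
    simp only [hTdef]
    rw [Finsupp.sum, map_sum, Finsupp.sum]
    refine Finset.sum_congr rfl fun q _ => ?_
    rw [MvPolynomial.smul_eval, map_prod]
    congr 1
    exact Finset.prod_congr rfl fun i _ => by rw [map_pow, hevalf]
  have hGood : ∀ j, ∀ r ∈ (G j).support,
      (⇑r : Fin n → ℕ) ∈ subResSet β j ∧ ∀ i, j ≤ i → r i = 0 := by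
    intro j r hr
    simp only [hGdef] at hr
    rcases Finset.mem_union.mp (MvPolynomial.support_add hr) with h | h
    · obtain ⟨q0, hq0, rfl⟩ := hSsupp j r (MvPolynomial.support_smul h)
      obtain ⟨h1', h2'⟩ := hc j q0 hq0
      exact ⟨by rw [hcoe']; exact h1', fun i hi => by rw [hcoe]; exact h2' i hi⟩
    · simp only [hTdef, Finsupp.sum] at h
      obtain ⟨q0, hq0mem, hrmem⟩ := Finset.mem_biUnion.mp (MvPolynomial.support_sum h)
      have hq0 : ct j q0 ≠ 0 := Finsupp.mem_support_iff.mp hq0mem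
      have hrmem' := MvPolynomial.support_smul hrmem
      obtain ⟨⟨hq0ne, p, ⟨hpβ, hpne⟩, hlep⟩, hq0bd⟩ := hct j q0 hq0
      obtain ⟨⟨p', hp', hle'⟩, hne', hsupp'⟩ :=
        key_prod β f hfsupp (∑ i, q0 i) q0 rfl r hrmem'
      have hrbd : ∀ i, j ≤ i → r i = 0 := by
        intro i hi
        by_contra hri
        obtain ⟨i2, hq0i2, hii2⟩ := hsupp' i hri
        have hlt : i2 < j := by
          by_contra hcon
          exact hq0i2 (hq0bd i2 (le_of_not_gt hcon))
        exact absurd (lt_of_le_of_lt hii2 hlt) (not_lt.mpr hi)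
      have hrne : ∃ l, r l ≠ 0 := hne' hq0ne
      refine ⟨⟨?_, fun l => p l - q0 l + p' l, ⟨?_, ?_⟩, fun l => ?_⟩, hrbd⟩
      · obtain ⟨l, hl⟩ := hrne
        intro h0
        exact hl (congrFun h0 l)
      · have e2 : (fun l => (p l - q0 l) + q0 l) = p :=
          funext fun l => Nat.sub_add_cancel (hlep l)
        calc β j = bpow β p := hpβ
          _ = bpow β (fun l => p l - q0 l) * bpow β q0 := by
              rw [← bpow_add, e2]
          _ = bpow β (fun l => p l - q0 l) * bpow β p' := by
              rw [show bpow β q0 = bpow β p' from hp']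
          _ = bpow β (fun l => p l - q0 l + p' l) := (bpow_add β _ _).symm
      · intro k hk heq
        obtain ⟨l, hl⟩ := hrne
        have h2 := congrFun heq l
        by_cases hc2 : l = k
        · subst hc2
          exact hl (hrbd l hk)
        · rw [if_neg hc2] at h2
          have := hle' l
          omega
      · exact le_trans (hle' l) (Nat.le_add_left (p' l) (p l - q0 l))
  refine ⟨fun j => b j * a j,
    fun j => Finsupp.equivMapDomain Finsupp.equivFunOnFinite (AddMonoidAlgebra.coeff (G j)),
    fun j => mul_ne_zero (hb j) (ha j), ?_, ?_⟩
  · intro j q hq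
    have hqmem : Finsupp.equivFunOnFinite.symm q ∈ (G j).support := by
      rw [MvPolynomial.mem_support_iff]
      rw [Finsupp.equivMapDomain_apply] at hq
      exact hq
    obtain ⟨h1', h2'⟩ := hGood j _ hqmem
    rw [hcoe'] at h1'
    exact ⟨h1', fun i hi => by rw [← hcoe q i]; exact h2' i hi⟩
  · intro z j
    have hsum : ((Finsupp.equivMapDomain Finsupp.equivFunOnFinite (AddMonoidAlgebra.coeff (G j))).sum
        fun q coef => coef * ∏ i, z i ^ q i) = MvPolynomial.eval z (G j) := by
      rw [Finsupp.sum_equivMapDomain, MvPolynomial.eval_eq', Finsupp.sum]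
      exact Finset.sum_congr rfl fun d _ => rfl
    simp only [Function.comp_apply]
    rw [hPte (P z) j, hsum]
    simp only [hGdef]
    rw [map_add, MvPolynomial.smul_eval, hevalS, hevalT, hPe z j]
    ring
end
end

section
/- Let β and G^r_β be as in the definition of sub-resonant polynomial transformations. Then every element P ∈ G^r_β is an invertible map of ℂⁿ, and P⁻¹ ∈ G^r_β. Hence G^r_β is a subgroup of Aut(ℂⁿ). -/
open Finset

noncomputable section

/-- unit multi-index -/
def eexp {n : ℕ} (i : Fin n) : Fin n → ℕ := fun l => if l = i then 1 else 0

/-- admissible exponent for coordinate j -/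
def OkQ {n : ℕ} (β : Fin n → ℂ) (j : Fin n) (q : Fin n → ℕ) : Prop :=
  q ∈ subResSet β j ∧ ∀ i, j ≤ i → q i = 0

def Step {n : ℕ} (β : Fin n → ℂ) (q r : Fin n → ℕ) : Prop :=
  ∃ (i : Fin n) (q' q₀ : Fin n → ℕ), OkQ β i q' ∧ q = q₀ + eexp i ∧ r = q₀ + q'

def Reach {n : ℕ} (β : Fin n → ℂ) : (Fin n → ℕ) → (Fin n → ℕ) → Prop :=
  Relation.ReflTransGen (Step β)

lemma step_add {n : ℕ} {β : Fin n → ℂ} {q r : Fin n → ℕ} (s : Fin n → ℕ)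
    (h : Step β q r) : Step β (q + s) (r + s) := by
  obtain ⟨i, q', q₀, h1, rfl, rfl⟩ := h
  exact ⟨i, q', q₀ + s, h1, by ring, by ring⟩

lemma reach_add {n : ℕ} {β : Fin n → ℂ} {q r : Fin n → ℕ} (s : Fin n → ℕ)
    (h : Reach β q r) : Reach β (q + s) (r + s) := by
  induction h with
  | refl => exact Relation.ReflTransGen.refl
  | tail _ hstep ih => exact ih.tail (step_add s hstep)

lemma bpow_add {n : ℕ} (β : Fin n → ℂ) (p q : Fin n → ℕ) :
    bpow β (p + q) = bpow β p * bpow β q := by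
  simp [bpow, pow_add, Finset.prod_mul_distrib]

lemma bpow_eexp {n : ℕ} (β : Fin n → ℂ) (i : Fin n) : bpow β (eexp i) = β i := by
  simp [bpow, eexp]

lemma step_ok {n : ℕ} {β : Fin n → ℂ} (h1 : ∀ i, ‖β i‖ < 1)
    {j : Fin n} {q r : Fin n → ℕ} (hq : OkQ β j q) (h : Step β q r) : OkQ β j r := by
  obtain ⟨i, q', q₀, hq', rfl, rfl⟩ := h
  obtain ⟨⟨hne, p, ⟨hpres, hpnot⟩, hle⟩, hsupp⟩ := hq
  obtain ⟨⟨hne', p', ⟨hpres', hpnot'⟩, hle'⟩, hsupp'⟩ := hq'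
  have hij : i < j := by
    by_contra hcon
    have := hsupp i (le_of_not_gt hcon)
    simp [eexp] at this
  have hpi : 1 ≤ p i := le_trans (by simp [eexp]) (hle i)
  set p₀ : Fin n → ℕ := fun l => p l - eexp i l with hp₀
  have hpdec : p = p₀ + eexp i := by
    funext l
    by_cases hl : l = i <;> simp [hp₀, eexp, hl] <;> omega
  have hp'ne : p' ≠ 0 := by
    intro h0
    have hβ1 : β i = 1 := by simpa [h0, bpow] using hpres'
    have := h1 i
    rw [hβ1] at this
    simp at this
  refine ⟨⟨?_, p₀ + p', ⟨?_, ?_⟩, ?_⟩, ?_⟩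
  · -- q₀ + q' ≠ 0
    intro h0
    apply hne'
    funext l
    have := congrFun h0 l
    simp at this ⊢
    omega
  · -- β j = bpow β (p₀ + p')
    rw [bpow_add, ← hpres', ← bpow_eexp β i, ← bpow_add, ← hpdec]
    exact hpres
  · -- p₀ + p' ≠ e_k for k ≥ j
    intro k hk heq
    have hsum : ∑ l, (p₀ + p') l = 1 := by
      rw [heq]
      simp
    have hsum' : ∑ l, p₀ l + ∑ l, p' l = 1 := by
      rw [← Finset.sum_add_distrib]; exact hsum
    have hp'pos : 0 < ∑ l, p' l := by
      rcases Nat.eq_zero_or_pos (∑ l, p' l) with h0 | h0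
      · exact absurd (funext fun l => Finset.sum_eq_zero_iff.mp h0 l (Finset.mem_univ l)) hp'ne
      · exact h0
    have hp₀0 : ∀ l, p₀ l = 0 := by
      intro l
      have : ∑ l, p₀ l = 0 := by omega
      exact Finset.sum_eq_zero_iff.mp this l (Finset.mem_univ l)
    have hpp : p' = fun l => if l = k then 1 else 0 := by
      funext l
      have := congrFun heq l
      simp [hp₀0 l] at this ⊢
      exact this
    have hki : k < i := by
      by_contra hcon
      exact hpnot' k (le_of_not_gt hcon) hpp
    exact absurd hk (not_le.mpr (lt_trans hki hij))
  · -- bound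
    intro l
    have h1l : q₀ l + eexp i l ≤ p₀ l + eexp i l := by
      have := hle l
      rw [hpdec] at this
      exact this
    have := hle' l
    simp at h1l ⊢
    omega
  · -- support
    intro l hl
    have h1l := hsupp l hl
    have h2l : q' l = 0 := hsupp' l (le_of_lt (lt_of_lt_of_le hij hl))
    simp [eexp] at h1l
    simp [h2l]
    omega

open MvPolynomial

abbrev es {n : ℕ} : (Fin n → ℕ) ≃ (Fin n →₀ ℕ) := Finsupp.equivFunOnFinite.symm

def toPoly {n : ℕ} (c : (Fin n → ℕ) →₀ ℂ) : MvPolynomial (Fin n) ℂ :=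
  c.sum fun q coef => monomial (es q) coef

lemma coe_es {n : ℕ} (q : Fin n → ℕ) : ⇑(es q) = q := rfl

lemma eval_toPoly {n : ℕ} (z : Fin n → ℂ) (c : (Fin n → ℕ) →₀ ℂ) :
    eval z (toPoly c) = c.sum fun q coef => coef * ∏ i, z i ^ q i := by
  rw [toPoly, Finsupp.sum, map_sum, Finsupp.sum]
  refine Finset.sum_congr rfl fun q hq => ?_
  rw [eval_monomial, Finsupp.prod_pow]
  simp [coe_es]

lemma support_toPoly {n : ℕ} (c : (Fin n → ℕ) →₀ ℂ) {d : Fin n →₀ ℕ}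
    (hd : d ∈ (toPoly c).support) : ⇑d ∈ c.support := by
  classical
  rw [toPoly, Finsupp.sum] at hd
  have := MvPolynomial.support_sum hd
  rw [Finset.mem_biUnion] at this
  obtain ⟨q, hq, hd2⟩ := this
  have := support_monomial_subset hd2
  simp only [Finset.mem_singleton] at this
  subst this
  rw [coe_es]
  exact hq

lemma eval_congr_vars {n : ℕ} (f : MvPolynomial (Fin n) ℂ) (g₁ g₂ : Fin n → ℂ)
    (h : ∀ i, (∃ d ∈ f.support, d i ≠ 0) → g₁ i = g₂ i) : eval g₁ f = eval g₂ f := by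
  rw [eval_eq, eval_eq]
  refine Finset.sum_congr rfl fun d hd => ?_
  congr 1
  refine Finset.prod_congr rfl fun i _ => ?_
  by_cases hdi : d i = 0
  · simp [hdi]
  · rw [h i ⟨d, hd, hdi⟩]

lemma aeval_eq_eval {n : ℕ} (z : Fin n → ℂ) (f : MvPolynomial (Fin n) ℂ) :
    aeval z f = eval z f := by
  rw [← coe_aeval_eq_eval]; rfl

lemma eval_aeval' {n : ℕ} (z : Fin n → ℂ) (g : Fin n → MvPolynomial (Fin n) ℂ)
    (f : MvPolynomial (Fin n) ℂ) :
    eval z (aeval g f) = eval (fun i => eval z (g i)) f := by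
  rw [← aeval_eq_eval, comp_aeval_apply (f := g) (aeval z) f]
  simp [aeval_eq_eval]

lemma coe_single_eq_eexp {n : ℕ} (i : Fin n) : ⇑(Finsupp.single i 1) = eexp i := by
  funext l
  simp [Finsupp.single_apply, eexp, eq_comm]

lemma support_one_sub {n : ℕ} {d : Fin n →₀ ℕ}
    (hd : d ∈ (1 : MvPolynomial (Fin n) ℂ).support) : d = 0 := by
  have h1 : (1 : MvPolynomial (Fin n) ℂ) = monomial 0 1 := by
    rw [← MvPolynomial.C_1, MvPolynomial.C_apply]
  rw [h1] at hd
  simpa using MvPolynomial.support_monomial_subset hd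

lemma prodpow_support {n : ℕ} {β : Fin n → ℂ} (Qp : Fin n → MvPolynomial (Fin n) ℂ)
    (hQp : ∀ i, ∀ d ∈ (Qp i).support, d = Finsupp.single i 1 ∨ OkQ β i ⇑d) :
    ∀ (N : ℕ) (q : Fin n → ℕ), (∑ i, q i) ≤ N →
      ∀ d ∈ (∏ i, Qp i ^ q i).support, Reach β q ⇑d := by
  classical
  intro N
  induction N with
  | zero =>
    intro q hq d hd
    have hq0 : q = 0 := funext fun l =>
      Finset.sum_eq_zero_iff.mp (Nat.le_zero.mp hq) l (Finset.mem_univ l)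
    subst hq0
    simp only [Pi.zero_apply, pow_zero, Finset.prod_const_one] at hd
    have := support_one_sub hd
    subst this
    simp only [Finsupp.coe_zero]
    exact Relation.ReflTransGen.refl
  | succ N ih =>
    intro q hq d hd
    by_cases hq0 : q = 0
    · subst hq0
      simp only [Pi.zero_apply, pow_zero, Finset.prod_const_one] at hd
      have := support_one_sub hd
      subst this
      simp only [Finsupp.coe_zero]
      exact Relation.ReflTransGen.refl
    · -- pick i with q i ≥ 1
      obtain ⟨i, hi⟩ : ∃ i, 1 ≤ q i := by
        by_contra hcon
        push_neg at hcon
        exact hq0 (funext fun l => by have := hcon l; simp only [Pi.zero_apply]; omega)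
      set q' : Fin n → ℕ := Function.update q i (q i - 1) with hq'
      have hqdec : q = q' + eexp i := by
        funext l
        by_cases hl : l = i
        · subst hl
          simp only [Pi.add_apply, hq', Function.update_self, eexp]
          simp only [if_true]
          omega
        · simp [hq', eexp, Function.update_apply, hl]
      have hsum' : (∑ l, q' l) ≤ N := by
        have h1 : ∑ l, q l = ∑ l, q' l + 1 := by
          rw [hqdec]
          simp [Finset.sum_add_distrib, eexp]
        omega
      have hsplit : (∏ l, Qp l ^ q l) = Qp i * ∏ l, Qp l ^ q' l := by
        rw [← Finset.mul_prod_erase Finset.univ (fun l => Qp l ^ q l) (Finset.mem_univ i),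
            ← Finset.mul_prod_erase Finset.univ (fun l => Qp l ^ q' l) (Finset.mem_univ i)]
        have h2 : Qp i ^ q i = Qp i * Qp i ^ q' i := by
          have : q i = q' i + 1 := by
            rw [hq', Function.update_self]
            omega
          rw [this, pow_succ]
          ring
        have h3 : ∏ l ∈ Finset.univ.erase i, Qp l ^ q l
            = ∏ l ∈ Finset.univ.erase i, Qp l ^ q' l :=
          Finset.prod_congr rfl (fun l hl => by
            rw [hq', Function.update_apply, if_neg (Finset.mem_erase.mp hl).1])
        rw [h2, h3]
        ring
      rw [hsplit] at hd
      have := MvPolynomial.support_mul _ _ hd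
      rw [Finset.mem_add] at this
      obtain ⟨s, hs, t, ht, hst⟩ := this
      have hreach' : Reach β q' ⇑t := ih q' hsum' t ht
      have hd2 : ⇑d = ⇑t + ⇑s := by rw [← hst]; simp [add_comm]
      rcases hQp i s hs with hsi | hsok
      · subst hsi
        rw [hd2, coe_single_eq_eexp, hqdec]
        exact reach_add (eexp i) hreach'
      · rw [hd2, hqdec]
        refine Relation.ReflTransGen.head ?_ (reach_add ⇑s hreach')
        exact ⟨i, ⇑s, q', hsok, rfl, rfl⟩

lemma aeval_support {n : ℕ} {β : Fin n → ℂ} (Qp : Fin n → MvPolynomial (Fin n) ℂ)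
    (hQp : ∀ i, ∀ d ∈ (Qp i).support, d = Finsupp.single i 1 ∨ OkQ β i ⇑d)
    (f : MvPolynomial (Fin n) ℂ) {d : Fin n →₀ ℕ} (hd : d ∈ (aeval Qp f).support) :
    ∃ q ∈ f.support, Reach β ⇑q ⇑d := by
  classical
  rw [aeval_def, eval₂_eq' (algebraMap ℂ (MvPolynomial (Fin n) ℂ)) Qp f] at hd
  have := MvPolynomial.support_sum hd
  rw [Finset.mem_biUnion] at this
  obtain ⟨q, hq, hd2⟩ := this
  refine ⟨q, hq, ?_⟩
  have hd3 : d ∈ (∏ i, Qp i ^ q i).support := by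
    have : (algebraMap ℂ (MvPolynomial (Fin n) ℂ)) (coeff q f) * ∏ i, Qp i ^ q i
        = (coeff q f) • ∏ i, Qp i ^ q i := by
      rw [MvPolynomial.algebraMap_eq, ← MvPolynomial.C_mul']
    rw [this] at hd2
    exact MvPolynomial.support_smul hd2
  exact prodpow_support Qp hQp (∑ i, (⇑q : Fin n → ℕ) i) ⇑q le_rfl d hd3

lemma reach_ok {n : ℕ} {β : Fin n → ℂ} (h1 : ∀ i, ‖β i‖ < 1)
    {j : Fin n} {q r : Fin n → ℕ} (hq : OkQ β j q) (h : Reach β q r) : OkQ β j r := by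
  induction h with
  | refl => exact hq
  | tail _ hstep ih => exact step_ok h1 ih hstep

def invPoly {n : ℕ} (a : Fin n → ℂ) (c : Fin n → ((Fin n → ℕ) →₀ ℂ)) (j : ℕ) :
    MvPolynomial (Fin n) ℂ :=
  if h : j < n then
    (a ⟨j, h⟩)⁻¹ •
      (X ⟨j, h⟩ - aeval (fun i : Fin n => if hi : (i : ℕ) < j then invPoly a c i else 0)
        (toPoly (c ⟨j, h⟩)))
  else 0
termination_by j
decreasing_by exact hi

lemma invPoly_eq {n : ℕ} (a : Fin n → ℂ) (c : Fin n → ((Fin n → ℕ) →₀ ℂ)) (j : Fin n) :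
    invPoly a c j.val = (a j)⁻¹ •
      (X j - aeval (fun i : Fin n => if (i : ℕ) < j.val then invPoly a c i else 0)
        (toPoly (c j))) := by
  rw [invPoly, dif_pos j.isLt]
  simp only [Fin.eta, dite_eq_ite]

lemma invPoly_support_sub {n : ℕ} (a : Fin n → ℂ) (c : Fin n → ((Fin n → ℕ) →₀ ℂ))
    (j : Fin n) {d : Fin n →₀ ℕ} (hd : d ∈ (invPoly a c j.val).support) :
    d = Finsupp.single j 1 ∨
      d ∈ (aeval (fun i : Fin n => if (i : ℕ) < j.val then invPoly a c i else 0)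
        (toPoly (c j))).support := by
  classical
  rw [invPoly_eq] at hd
  have h2 := MvPolynomial.support_sub _ _ _ (MvPolynomial.support_smul hd)
  rcases Finset.mem_union.mp h2 with h | h
  · left
    rw [MvPolynomial.support_X] at h
    exact Finset.mem_singleton.mp h
  · right
    exact h

lemma invPoly_okS {n : ℕ} {β : Fin n → ℂ} (h1 : ∀ i, ‖β i‖ < 1)
    (a : Fin n → ℂ) (c : Fin n → ((Fin n → ℕ) →₀ ℂ))
    (hc : ∀ j q, c j q ≠ 0 → q ∈ subResSet β j ∧ ∀ i, j ≤ i → q i = 0) :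
    ∀ (m : ℕ) (j : Fin n), j.val = m →
      ∀ d ∈ (aeval (fun i : Fin n => if (i : ℕ) < j.val then invPoly a c i else 0)
        (toPoly (c j))).support, OkQ β j ⇑d := by
  intro m
  induction m using Nat.strong_induction_on with
  | _ m IH =>
    intro j hj d hd
    have hQp : ∀ i, ∀ s ∈ ((fun i : Fin n =>
        if (i : ℕ) < j.val then invPoly a c i else 0) i).support,
        s = Finsupp.single i 1 ∨ OkQ β i ⇑s := by
      intro i s hs
      simp only at hs
      by_cases hij : (i : ℕ) < j.val
      · rw [if_pos hij] at hs
        rcases invPoly_support_sub a c i hs with h | h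
        · exact Or.inl h
        · exact Or.inr (IH i.val (hj ▸ hij) i rfl s h)
      · rw [if_neg hij] at hs
        simp at hs
    obtain ⟨q, hq, hreach⟩ := aeval_support (β := β) _ hQp _ hd
    have hq' := support_toPoly _ hq
    have hcq := hc j ⇑q (Finsupp.mem_support_iff.mp hq')
    exact reach_ok h1 ⟨hcq.1, hcq.2⟩ hreach

lemma invPoly_support {n : ℕ} {β : Fin n → ℂ} (h1 : ∀ i, ‖β i‖ < 1)
    (a : Fin n → ℂ) (c : Fin n → ((Fin n → ℕ) →₀ ℂ))
    (hc : ∀ j q, c j q ≠ 0 → q ∈ subResSet β j ∧ ∀ i, j ≤ i → q i = 0)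
    (j : Fin n) {d : Fin n →₀ ℕ} (hd : d ∈ (invPoly a c j.val).support) :
    d = Finsupp.single j 1 ∨ OkQ β j ⇑d := by
  rcases invPoly_support_sub a c j hd with h | h
  · exact Or.inl h
  · exact Or.inr (invPoly_okS h1 a c hc j.val j rfl d h)

def fromPoly {n : ℕ} (f : MvPolynomial (Fin n) ℂ) : (Fin n → ℕ) →₀ ℂ :=
  ∑ d ∈ f.support, Finsupp.single (⇑d) (coeff d f)

lemma fromPoly_sum {n : ℕ} (z : Fin n → ℂ) (f : MvPolynomial (Fin n) ℂ) :
    ((fromPoly f).sum fun q coef => coef * ∏ i, z i ^ q i) = eval z f := by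
  classical
  rw [fromPoly, ← Finsupp.sum_finset_sum_index (by intro a; simp)
    (by intro q b₁ b₂; ring)]
  rw [eval_eq']
  refine Finset.sum_congr rfl fun d hd => ?_
  rw [Finsupp.sum_single_index (by simp)]

lemma fromPoly_ne_zero {n : ℕ} {f : MvPolynomial (Fin n) ℂ} {q : Fin n → ℕ}
    (h : fromPoly f q ≠ 0) : ∃ d ∈ f.support, ⇑d = q := by
  classical
  rw [fromPoly, Finsupp.finset_sum_apply] at h
  obtain ⟨d, hd, hne⟩ := Finset.exists_ne_zero_of_sum_ne_zero h
  refine ⟨d, hd, ?_⟩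
  by_contra hcon
  rw [Finsupp.single_apply, if_neg hcon] at hne
  exact hne rfl

/-- every β sub-resonant polynomial transformation is an
invertible map of ℂⁿ whose inverse is again β sub-resonant; hence `G^r_β` is a
subgroup of `Aut(ℂⁿ)`. -/
theorem isSubResonant_inverse {n : ℕ} (β : Fin n → ℂ)
    (h1 : ∀ i, ‖β i‖ < 1)
    (hpos : ∀ i, 0 < ‖β i‖)
    (hmono : ∀ i j : Fin n, i ≤ j → ‖β j‖ ≤ ‖β i‖)
    (P : (Fin n → ℂ) → (Fin n → ℂ)) (hP : IsSubResonant β P) :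
    Function.Bijective P ∧
      ∃ Q : (Fin n → ℂ) → (Fin n → ℂ), IsSubResonant β Q ∧
        P ∘ Q = id ∧ Q ∘ P = id := by
  classical
  obtain ⟨a, c, ha, hc, hPz⟩ := hP
  set Qf : (Fin n → ℂ) → Fin n → ℂ := fun z j => eval z (invPoly a c j.val) with hQf
  -- variables of toPoly (c j) are < j
  have hvars : ∀ (j : Fin n) (i : Fin n),
      (∃ d ∈ (toPoly (c j)).support, d i ≠ 0) → i < j := by
    intro j i ⟨d, hd, hdi⟩
    have h2 := support_toPoly _ hd
    have h3 := (hc j ⇑d (Finsupp.mem_support_iff.mp h2)).2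
    by_contra hcon
    exact hdi (h3 i (le_of_not_gt hcon))
  -- claim 2 : P (Qf z) = z
  have claim2 : ∀ z, P (Qf z) = z := by
    intro z
    funext j
    rw [hPz (Qf z) j]
    have e1 : ((c j).sum fun q coef => coef * ∏ i, (Qf z) i ^ q i)
        = eval (Qf z) (toPoly (c j)) := (eval_toPoly _ _).symm
    have e2 : Qf z j = (a j)⁻¹ * (z j - eval (Qf z) (toPoly (c j))) := by
      rw [hQf]
      simp only
      rw [invPoly_eq, smul_eval, map_sub, eval_X, eval_aeval']
      congr 2
      refine eval_congr_vars _ _ _ fun i hi => ?_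
      have hij : i < j := hvars j i hi
      rw [if_pos (Fin.lt_iff_val_lt_val.mp hij)]
    rw [e1, e2, mul_inv_cancel_left₀ (ha j)]
    simp
  -- claim 3 : Qf (P z) = z
  have claim3 : ∀ (m : ℕ) (j : Fin n), j.val = m → ∀ z, Qf (P z) j = z j := by
    intro m
    induction m using Nat.strong_induction_on with
    | _ m IH =>
      intro j hj z
      rw [hQf]
      simp only
      rw [invPoly_eq, smul_eval, map_sub, eval_X, eval_aeval']
      have e3 : (eval (fun i : Fin n =>
          eval (P z) (if (i : ℕ) < j.val then invPoly a c i else 0)) (toPoly (c j)))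
          = eval z (toPoly (c j)) := by
        refine eval_congr_vars _ _ _ fun i hi => ?_
        have hij : i < j := hvars j i hi
        rw [if_pos (Fin.lt_iff_val_lt_val.mp hij)]
        exact IH i.val (hj ▸ Fin.lt_iff_val_lt_val.mp hij) i rfl z
      rw [e3, hPz z j, ← eval_toPoly z (c j), add_sub_cancel_right,
        inv_mul_cancel_left₀ (ha j)]
  have hLR : ∀ z, Qf (P z) = z := fun z => funext fun j => claim3 j.val j rfl z
  constructor
  · exact Function.bijective_iff_has_inverse.mpr ⟨Qf, fun z => hLR z, fun z => claim2 z⟩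
  · refine ⟨Qf, ?_, funext fun z => claim2 z, funext fun z => hLR z⟩
    refine ⟨fun j => (a j)⁻¹,
      fun j => fromPoly ((-(a j)⁻¹) •
        (aeval (fun i : Fin n => if (i : ℕ) < j.val then invPoly a c i else 0)
          (toPoly (c j)))), fun j => inv_ne_zero (ha j), ?_, ?_⟩
    · intro j q hq
      obtain ⟨d, hd, rfl⟩ := fromPoly_ne_zero hq
      have hd2 := MvPolynomial.support_smul hd
      exact invPoly_okS h1 a c hc j.val j rfl d hd2
    · intro z j
      rw [fromPoly_sum, smul_eval]
      rw [hQf]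
      simp only
      rw [invPoly_eq, smul_eval, map_sub, eval_X]
      ring
end
end

section
/- With notation as in the definition of sub-resonant transformations: if q ∈ 𝒬_{n+1}, p ∈ 𝒫_{n+1} with q ≤ p componentwise, and for each j ≤ n one chooses natural numbers i^{(j)}_1,...,i^{(j)}_{N_j+1} summing to qⱼ and elements s^{(j)}_k ∈ 𝒬ⱼ with s^{(j)}_k ≤ p̲^{(j)}_k for some p̲^{(j)}_k ∈ 𝒫ⱼ, then the tuple p̃ := p − ∑ⱼ (∑_{k≤N_j} i^{(j)}_k) eⱼ + ∑ⱼ ∑_{k≤N_j} i^{(j)}_k p̲^{(j)}_k satisfies β^{p̃} = β_{n+1}, and p̃ ≥ ∑_{j=1}^{n} ( ∑_{k=1}^{N_j} i^{(j)}_k s^{(j)}_k + i^{(j)}_{N_j+1} eⱼ ) componentwise. -/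
open Finset

noncomputable section

/-- the key combinatorial lemma showing composition of
sub-resonant maps remains sub-resonant. Given `q ∈ 𝒬_{n+1}`, `p ∈ 𝒫_{n+1}` with
`q ≤ p`, and for each `j ≤ n` naturals `i^{(j)}_1, ..., i^{(j)}_{N_j+1}` summing
to `qⱼ`, together with `s^{(j)}_k ∈ 𝒬ⱼ` bounded by `p̲^{(j)}_k ∈ 𝒫ⱼ`, the tuple
`p̃ = p − ∑ⱼ(∑_{k ≤ N_j} i^{(j)}_k)eⱼ + ∑ⱼ∑_{k ≤ N_j} i^{(j)}_k p̲^{(j)}_k`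
satisfies `β^p̃ = β_{n+1}` and bounds
`∑ⱼ(∑_{k ≤ N_j} i^{(j)}_k s^{(j)}_k + i^{(j)}_{N_j+1} eⱼ)` componentwise. -/
theorem subresonant_composition_key_lemma {n : ℕ} (β : Fin (n + 1) → ℂ)
    (h1 : ∀ i, ‖β i‖ < 1)
    (hpos : ∀ i, 0 < ‖β i‖)
    (hmono : ∀ i j : Fin (n + 1), i ≤ j → ‖β j‖ ≤ ‖β i‖)
    (q p : Fin (n + 1) → ℕ)
    (hq : q ∈ subResSet β (Fin.last n))
    (hp : p ∈ resSet β (Fin.last n))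
    (hqp : ∀ l, q l ≤ p l)
    (N : Fin n → ℕ)
    (I : (j : Fin n) → Fin (N j + 1) → ℕ)
    (hI : ∀ j : Fin n, ∑ k, I j k = q j.castSucc)
    (s pbar : (j : Fin n) → Fin (N j) → (Fin (n + 1) → ℕ))
    (hs : ∀ (j : Fin n) (k : Fin (N j)), s j k ∈ subResSet β j.castSucc)
    (hpbar : ∀ (j : Fin n) (k : Fin (N j)), pbar j k ∈ resSet β j.castSucc)
    (hsp : ∀ (j : Fin n) (k : Fin (N j)) (l : Fin (n + 1)), s j k l ≤ pbar j k l) :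
    (bpow β (fun l =>
        (p l - ∑ j : Fin n, (∑ k : Fin (N j), I j k.castSucc) *
            (if l = j.castSucc then 1 else 0)) +
          ∑ j : Fin n, ∑ k : Fin (N j), I j k.castSucc * pbar j k l)
        = β (Fin.last n)) ∧
    ∀ l : Fin (n + 1),
      (∑ j : Fin n, ((∑ k : Fin (N j), I j k.castSucc * s j k l) +
          I j (Fin.last (N j)) * (if l = j.castSucc then 1 else 0))) ≤
        (p l - ∑ j : Fin n, (∑ k : Fin (N j), I j k.castSucc) *
            (if l = j.castSucc then 1 else 0)) +
          ∑ j : Fin n, ∑ k : Fin (N j), I j k.castSucc * pbar j k l := by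
  classical
  have hβ0 : ∀ l, β l ≠ 0 := by
    intro l h0
    have h := hpos l
    rw [h0] at h
    simp at h
  have hCq : ∀ j : Fin n,
      (∑ k : Fin (N j), I j k.castSucc) + I j (Fin.last (N j)) = q j.castSucc := by
    intro j
    rw [← hI j, Fin.sum_univ_castSucc]
  have hAcast : ∀ j0 : Fin n,
      (∑ j : Fin n, (∑ k : Fin (N j), I j k.castSucc) *
          (if j0.castSucc = j.castSucc then 1 else 0))
        = ∑ k : Fin (N j0), I j0 k.castSucc := by
    intro j0
    rw [Finset.sum_eq_single j0]
    · simp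
    · intro j _ hj
      have : j0.castSucc ≠ j.castSucc := fun h => hj ((Fin.castSucc_injective n) h).symm
      simp [this]
    · simp
  have hAlast :
      (∑ j : Fin n, (∑ k : Fin (N j), I j k.castSucc) *
          (if (Fin.last n) = j.castSucc then 1 else 0)) = 0 := by
    apply Finset.sum_eq_zero
    intro j _
    simp [(Fin.castSucc_lt_last j).ne']
  have hAle : ∀ l, (∑ j : Fin n, (∑ k : Fin (N j), I j k.castSucc) *
      (if l = j.castSucc then 1 else 0)) ≤ p l := by
    intro l
    induction l using Fin.lastCases with
    | last => rw [hAlast]; exact Nat.zero_le _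
    | cast j0 =>
        rw [hAcast j0]
        calc (∑ k : Fin (N j0), I j0 k.castSucc) ≤ q j0.castSucc := by
              rw [← hCq j0]; exact Nat.le_add_right _ _
          _ ≤ p j0.castSucc := hqp _
  constructor
  · -- the product identity
    have hAprod : (∏ l, β l ^ (∑ j : Fin n, (∑ k : Fin (N j), I j k.castSucc) *
          (if l = j.castSucc then 1 else 0)))
        = ∏ j : Fin n, β j.castSucc ^ (∑ k : Fin (N j), I j k.castSucc) := by
      have step : ∀ l, β l ^ (∑ j : Fin n, (∑ k : Fin (N j), I j k.castSucc) *
            (if l = j.castSucc then 1 else 0))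
          = ∏ j : Fin n, (if l = j.castSucc then
              β l ^ (∑ k : Fin (N j), I j k.castSucc) else 1) := by
        intro l
        rw [← Finset.prod_pow_eq_pow_sum]
        refine Finset.prod_congr rfl fun j _ => ?_
        split <;> simp
      rw [Finset.prod_congr rfl fun l _ => step l, Finset.prod_comm]
      refine Finset.prod_congr rfl fun j _ => ?_
      rw [Finset.prod_ite_eq' Finset.univ j.castSucc
        (fun l => β l ^ (∑ k : Fin (N j), I j k.castSucc))]
      simp
    have hBprod : (∏ l, β l ^ (∑ j : Fin n, ∑ k : Fin (N j), I j k.castSucc * pbar j k l))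
        = ∏ j : Fin n, β j.castSucc ^ (∑ k : Fin (N j), I j k.castSucc) := by
      have step : ∀ l, β l ^ (∑ j : Fin n, ∑ k : Fin (N j), I j k.castSucc * pbar j k l)
          = ∏ j : Fin n, ∏ k : Fin (N j), (β l ^ pbar j k l) ^ I j k.castSucc := by
        intro l
        rw [← Finset.prod_pow_eq_pow_sum]
        refine Finset.prod_congr rfl fun j _ => ?_
        rw [← Finset.prod_pow_eq_pow_sum]
        refine Finset.prod_congr rfl fun k _ => ?_
        rw [mul_comm, pow_mul]
      rw [Finset.prod_congr rfl fun l _ => step l, Finset.prod_comm]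
      refine Finset.prod_congr rfl fun j _ => ?_
      rw [Finset.prod_comm, ← Finset.prod_pow_eq_pow_sum]
      refine Finset.prod_congr rfl fun k _ => ?_
      rw [Finset.prod_pow]
      congr 1
      exact ((hpbar j k).1).symm
    have key : (bpow β (fun l =>
          (p l - ∑ j : Fin n, (∑ k : Fin (N j), I j k.castSucc) *
              (if l = j.castSucc then 1 else 0)) +
            ∑ j : Fin n, ∑ k : Fin (N j), I j k.castSucc * pbar j k l)) *
          (∏ l, β l ^ (∑ j : Fin n, (∑ k : Fin (N j), I j k.castSucc) *
              (if l = j.castSucc then 1 else 0)))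
        = bpow β p *
          (∏ l, β l ^ (∑ j : Fin n, ∑ k : Fin (N j), I j k.castSucc * pbar j k l)) := by
      unfold bpow
      rw [← Finset.prod_mul_distrib, ← Finset.prod_mul_distrib]
      refine Finset.prod_congr rfl fun l _ => ?_
      rw [← pow_add, ← pow_add]
      beta_reduce
      congr 1
      have := hAle l
      omega
    rw [hAprod, hBprod] at key
    have ht : (∏ j : Fin n, β j.castSucc ^ (∑ k : Fin (N j), I j k.castSucc)) ≠ 0 :=
      Finset.prod_ne_zero_iff.2 fun j _ => pow_ne_zero _ (hβ0 _)
    exact (mul_right_cancel₀ ht key).trans (hp.1).symm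
  · intro l
    have hsum : (∑ j : Fin n, ∑ k : Fin (N j), I j k.castSucc * s j k l)
        ≤ ∑ j : Fin n, ∑ k : Fin (N j), I j k.castSucc * pbar j k l :=
      Finset.sum_le_sum fun j _ => Finset.sum_le_sum fun k _ =>
        Nat.mul_le_mul_left _ (hsp j k l)
    induction l using Fin.lastCases with
    | last =>
        rw [hAlast, Nat.sub_zero]
        have h1 : (∑ j : Fin n, ((∑ k : Fin (N j), I j k.castSucc * s j k (Fin.last n)) +
              I j (Fin.last (N j)) * (if (Fin.last n) = j.castSucc then 1 else 0)))
            = ∑ j : Fin n, ∑ k : Fin (N j), I j k.castSucc * s j k (Fin.last n) := by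
          refine Finset.sum_congr rfl fun j _ => ?_
          simp [(Fin.castSucc_lt_last j).ne']
        rw [h1]
        exact hsum.trans (Nat.le_add_left _ _)
    | cast j0 =>
        rw [hAcast j0]
        have hsplit : (∑ j : Fin n, ((∑ k : Fin (N j), I j k.castSucc * s j k j0.castSucc) +
              I j (Fin.last (N j)) * (if j0.castSucc = j.castSucc then 1 else 0)))
            = (∑ j : Fin n, ∑ k : Fin (N j), I j k.castSucc * s j k j0.castSucc) +
              I j0 (Fin.last (N j0)) := by
          rw [Finset.sum_add_distrib]
          congr 1
          rw [Finset.sum_eq_single j0]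
          · simp
          · intro j _ hj
            have : j0.castSucc ≠ j.castSucc := fun h => hj ((Fin.castSucc_injective n) h).symm
            simp [this]
          · simp
        rw [hsplit]
        have h2 : I j0 (Fin.last (N j0)) ≤
            p j0.castSucc - ∑ k : Fin (N j0), I j0 k.castSucc := by
          have hq1 := hqp j0.castSucc
          have hq2 := hCq j0
          omega
        calc (∑ j : Fin n, ∑ k : Fin (N j), I j k.castSucc * s j k j0.castSucc) +
              I j0 (Fin.last (N j0))
            ≤ (∑ j : Fin n, ∑ k : Fin (N j), I j k.castSucc * pbar j k j0.castSucc) +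
              (p j0.castSucc - ∑ k : Fin (N j0), I j0 k.castSucc) := Nat.add_le_add hsum h2
          _ = _ := Nat.add_comm _ _
end
end

section
/- For P ∈ G^r_β and z ∈ ℂⁿ, the map θ_{−P(z)} ∘ P ∘ θ_z (where θ_w is translation by w) is again an element of G^r_β. -/
open Finset

noncomputable section

/-- evaluation at w -/
def ev {n : ℕ} (w : Fin n → ℂ) : ((Fin n → ℕ) →₀ ℂ) →ₗ[ℂ] ℂ :=
  Finsupp.linearCombination ℂ (fun q => ∏ i, w i ^ q i)

lemma ev_apply {n : ℕ} (w : Fin n → ℂ) (d : (Fin n → ℕ) →₀ ℂ) :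
    ev w d = d.sum fun q coef => coef * ∏ i, w i ^ q i := by
  rw [ev, Finsupp.linearCombination_apply]; rfl

def Eexp {n : ℕ} (z : Fin n → ℂ) (q : Fin n → ℕ) : (Fin n → ℕ) →₀ ℂ :=
  ∑ g ∈ Fintype.piFinset (fun i => Finset.range (q i + 1)),
    Finsupp.single g (∏ i, ((q i).choose (g i) : ℂ) * z i ^ (q i - g i))

lemma ev_Eexp {n : ℕ} (z w : Fin n → ℂ) (q : Fin n → ℕ) :
    ev w (Eexp z q) = ∏ i, (w i + z i) ^ q i := by
  rw [Eexp, map_sum]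
  have : ∀ g ∈ Fintype.piFinset (fun i => Finset.range (q i + 1)),
      ev w (Finsupp.single g (∏ i, ((q i).choose (g i) : ℂ) * z i ^ (q i - g i)))
      = ∏ i, (w i ^ g i * z i ^ (q i - g i) * ((q i).choose (g i) : ℂ)) := by
    intro g hg
    rw [ev, Finsupp.linearCombination_single, smul_eq_mul, ← Finset.prod_mul_distrib]
    congr 1; ext i; ring
  rw [Finset.sum_congr rfl this]
  have hbin : ∀ i : Fin n, (w i + z i) ^ q i
      = ∑ k ∈ Finset.range (q i + 1), w i ^ k * z i ^ (q i - k) * ((q i).choose k : ℂ) :=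
    fun i => add_pow _ _ _
  rw [Finset.prod_congr rfl (fun i _ => hbin i), Finset.prod_univ_sum]

lemma Eexp_apply_zero {n : ℕ} (z : Fin n → ℂ) (q : Fin n → ℕ) :
    Eexp z q 0 = ∏ i, z i ^ q i := by
  rw [Eexp, Finsupp.finset_sum_apply]
  rw [Finset.sum_eq_single (0 : Fin n → ℕ)]
  · simp
  · intro g _ hg; rw [Finsupp.single_apply_eq_zero]; intro h; exact absurd h.symm hg
  · intro h; exact absurd (by simp) h

lemma Eexp_apply_ne_zero {n : ℕ} (z : Fin n → ℂ) (q q' : Fin n → ℕ)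
    (h : Eexp z q q' ≠ 0) : ∀ i, q' i ≤ q i := by
  by_contra hc
  push_neg at hc
  apply h
  rw [Eexp, Finsupp.finset_sum_apply]
  apply Finset.sum_eq_zero
  intro g hg
  rw [Finsupp.single_apply_eq_zero]
  intro hgq'
  subst hgq'
  obtain ⟨i, hi⟩ := hc
  rw [Fintype.mem_piFinset] at hg
  have := hg i
  rw [Finset.mem_range] at this
  omega

def Eres {n : ℕ} (z : Fin n → ℂ) (q : Fin n → ℕ) : (Fin n → ℕ) →₀ ℂ :=
  Eexp z q - Finsupp.single 0 (∏ i, z i ^ q i)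

lemma Eres_ne_zero {n : ℕ} (z : Fin n → ℂ) (q q' : Fin n → ℕ)
    (h : Eres z q q' ≠ 0) : q' ≠ 0 ∧ ∀ l, q' l ≤ q l := by
  have hq'0 : q' ≠ 0 := by
    intro h0
    subst h0
    apply h
    rw [Eres, Finsupp.sub_apply, Eexp_apply_zero, Finsupp.single_eq_same, sub_self]
  refine ⟨hq'0, Eexp_apply_ne_zero z q q' ?_⟩
  intro hE
  apply h
  rw [Eres, Finsupp.sub_apply, hE, Finsupp.single_eq_of_ne' (fun h0 => hq'0 h0.symm), sub_self]

lemma ev_Eres {n : ℕ} (z w : Fin n → ℂ) (q : Fin n → ℕ) :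
    ev w (Eres z q) = (∏ i, (w i + z i) ^ q i) - ∏ i, z i ^ q i := by
  rw [Eres, map_sub, ev_Eexp]
  congr 1
  rw [ev, Finsupp.linearCombination_single, smul_eq_mul]
  simp

/-- for `P ∈ G^r_β` and `z ∈ ℂⁿ`, the map `θ_{−P(z)} ∘ P ∘ θ_z`
is again an element of `G^r_β`. -/
theorem isSubResonant_translation_conj {n : ℕ} (β : Fin n → ℂ)
    (h1 : ∀ i, ‖β i‖ < 1)
    (hpos : ∀ i, 0 < ‖β i‖)
    (hmono : ∀ i j : Fin n, i ≤ j → ‖β j‖ ≤ ‖β i‖)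
    (P : (Fin n → ℂ) → (Fin n → ℂ)) (hP : IsSubResonant β P) (z : Fin n → ℂ) :
    IsSubResonant β (fun w => P (w + z) - P z) := by
  obtain ⟨a, c, ha, hc, hPz⟩ := hP
  refine ⟨a, fun j => (c j).sum fun q _ => c j q • Eres z q, ha, ?_, ?_⟩
  · intro j q' hq'
    have hmem := Finsupp.support_sum (Finsupp.mem_support_iff.mpr hq')
    rw [Finset.mem_biUnion] at hmem
    obtain ⟨q, hqmem, hq'mem⟩ := hmem
    have hqne : (c j q • Eres z q) q' ≠ 0 := Finsupp.mem_support_iff.mp hq'mem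
    have hE : Eres z q q' ≠ 0 := by
      intro h
      apply hqne
      rw [Finsupp.smul_apply, h, smul_zero]
    obtain ⟨hq'0, hle⟩ := Eres_ne_zero z q q' hE
    obtain ⟨⟨hq0, p, hp, hqp⟩, hzero⟩ := hc j q (Finsupp.mem_support_iff.mp hqmem)
    refine ⟨⟨hq'0, p, hp, fun l => (hle l).trans (hqp l)⟩, fun i hi => ?_⟩
    have h1 := hzero i hi
    have h2 := hle i
    omega
  · intro w j
    show P (w + z) j - P z j = _
    rw [hPz (w + z) j, hPz z j]
    have hev : (((c j).sum fun q _ => c j q • Eres z q).sum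
          fun q coef => coef * ∏ i, w i ^ q i)
        = (c j).sum fun q coef =>
            coef * ((∏ i, (w i + z i) ^ q i) - ∏ i, z i ^ q i) := by
      rw [← ev_apply]
      rw [map_finsuppSum]
      apply Finsupp.sum_congr
      intro q _
      rw [map_smul, ev_Eres, smul_eq_mul]
    have hsub : ((c j).sum fun q coef =>
          coef * ((∏ i, (w i + z i) ^ q i) - ∏ i, z i ^ q i))
        = ((c j).sum fun q coef => coef * ∏ i, (w i + z i) ^ q i)
          - (c j).sum fun q coef => coef * ∏ i, z i ^ q i := by
      simp only [mul_sub]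
      exact Finsupp.sum_sub
    simp only [Pi.add_apply]
    rw [hev, hsub]
    ring
end
end

section
/- Let u₀ : ℂⁿ → ℂⁿ be a lower-triangular invertible linear map with diagonal entries β₁,...,βₙ. Then the eigenvalues of the linear endomorphism P ↦ P ∘ u₀ of the space of homogeneous polynomials of degree k in n variables are exactly the products β^p over multi-indices p ∈ ℕⁿ with |p| = k. -/
open Finset MvPolynomial

noncomputable section

namespace EigAux

variable {n : ℕ}

/-- order key: reverse variables then lex -/
def D (m : Fin n →₀ ℕ) : Lex (Fin n →₀ ℕ) :=
  toLex (Finsupp.domCongr (α := Fin n) (M := ℕ) Fin.revPerm m)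

lemma D_add (a b : Fin n →₀ ℕ) : D (a + b) = D a + D b := by
  unfold D; rw [map_add]; rfl

lemma D_inj : Function.Injective (D (n := n)) := by
  intro a b h
  exact (Finsupp.domCongr (α := Fin n) (M := ℕ) Fin.revPerm).injective h

lemma D_apply (m : Fin n →₀ ℕ) (j : Fin n) : ofLex (D m) j = m (Fin.rev j) := rfl

lemma D_single_lt {j i : Fin n} (h : j < i) :
    D (Finsupp.single j 1) < D (Finsupp.single i 1) := by
  refine Finsupp.Lex.lt_iff.mpr ⟨Fin.rev i, ?_, ?_⟩
  · intro d hd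
    rw [D_apply, D_apply, Finsupp.single_apply, Finsupp.single_apply]
    have h1 : ¬ j = d.rev := by
      intro hc; subst hc
      have h2 := Fin.rev_lt_rev.mpr hd
      rw [Fin.rev_rev] at h2
      exact lt_asymm h2 h
    have h2 : ¬ i = d.rev := by
      intro hc; subst hc; simp at hd
    simp [h1, h2]
  · rw [D_apply, D_apply, Finsupp.single_apply, Finsupp.single_apply, Fin.rev_rev]
    simp [h.ne]

lemma D_single_le {j i : Fin n} (h : j ≤ i) :
    D (Finsupp.single j 1) ≤ D (Finsupp.single i 1) := by
  rcases eq_or_lt_of_le h with rfl | h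
  · rfl
  · exact (D_single_lt h).le

/-- dominated: all monomials have the same total degree as `a` and key `≤ D a` -/
def dom (a : Fin n →₀ ℕ) (f : MvPolynomial (Fin n) ℂ) : Prop :=
  ∀ q ∈ f.support, (∑ i, q i = ∑ i, a i) ∧ D q ≤ D a

lemma cancel_of_le_le {M : Type*} [AddCommMonoid M] [PartialOrder M] [IsOrderedCancelAddMonoid M]
    {x a y b : M} (hx : x ≤ a) (hy : y ≤ b) (h : x + y = a + b) : x = a ∧ y = b := by
  rcases hx.lt_or_eq with h1 | rfl
  · exact absurd h (ne_of_lt (add_lt_add_of_lt_of_le h1 hy))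
  rcases hy.lt_or_eq with h2 | rfl
  · exact absurd h (ne_of_lt (add_lt_add_right h2 x))
  exact ⟨rfl, rfl⟩

lemma dom_mul {a b : Fin n →₀ ℕ} {f g : MvPolynomial (Fin n) ℂ}
    (hf : dom a f) (hg : dom b g) :
    dom (a + b) (f * g) ∧ coeff (a + b) (f * g) = coeff a f * coeff b g := by
  classical
  constructor
  · intro q hq
    have := MvPolynomial.support_mul f g hq
    rw [Finset.mem_add] at this
    obtain ⟨q1, hq1, q2, hq2, rfl⟩ := this
    obtain ⟨hd1, hl1⟩ := hf q1 hq1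
    obtain ⟨hd2, hl2⟩ := hg q2 hq2
    constructor
    · simp only [Finsupp.add_apply, Finset.sum_add_distrib, hd1, hd2]
    · rw [D_add, D_add]; exact add_le_add hl1 hl2
  · rw [MvPolynomial.coeff_mul]
    rw [Finset.sum_eq_single (a, b)]
    · intro p hp hne
      rw [Finset.HasAntidiagonal.mem_antidiagonal] at hp
      by_contra hc
      have h1 : p.1 ∈ f.support := by
        rw [MvPolynomial.mem_support_iff]; intro h; rw [h, zero_mul] at hc; exact hc rfl
      have h2 : p.2 ∈ g.support := by
        rw [MvPolynomial.mem_support_iff]; intro h; rw [h, mul_zero] at hc; exact hc rfl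
      obtain ⟨_, hl1⟩ := hf p.1 h1
      obtain ⟨_, hl2⟩ := hg p.2 h2
      have : D p.1 + D p.2 = D a + D b := by rw [← D_add, ← D_add, hp]
      obtain ⟨e1, e2⟩ := cancel_of_le_le hl1 hl2 this
      exact hne (Prod.ext (D_inj e1) (D_inj e2))
    · intro h
      rw [Finset.HasAntidiagonal.mem_antidiagonal] at h
      exact absurd rfl h

lemma dom_pow {a : Fin n →₀ ℕ} {f : MvPolynomial (Fin n) ℂ} (hf : dom a f) (e : ℕ) :
    dom (e • a) (f ^ e) ∧ coeff (e • a) (f ^ e) = (coeff a f) ^ e := by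
  induction e with
  | zero =>
    refine ⟨?_, ?_⟩
    · intro q hq
      rw [pow_zero] at hq
      have hq0 : q = 0 := by
        by_contra hne
        have hh := MvPolynomial.mem_support_iff.mp hq
        rw [MvPolynomial.coeff_one] at hh
        simp [Ne.symm hne] at hh
      subst hq0
      simp
    · simp
  | succ m ih =>
    have := dom_mul ih.1 hf
    rw [succ_nsmul, pow_succ]
    exact ⟨this.1, by rw [this.2, ih.2, pow_succ]⟩

lemma dom_prod {ι : Type*} (s : Finset ι) (a : ι → Fin n →₀ ℕ)
    (f : ι → MvPolynomial (Fin n) ℂ) (h : ∀ i ∈ s, dom (a i) (f i)) :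
    dom (∑ i ∈ s, a i) (∏ i ∈ s, f i) ∧
      coeff (∑ i ∈ s, a i) (∏ i ∈ s, f i) = ∏ i ∈ s, coeff (a i) (f i) := by
  classical
  induction s using Finset.induction with
  | empty =>
    refine ⟨?_, by simp⟩
    intro q hq
    rw [Finset.prod_empty] at hq
    have hq0 : q = 0 := by
      by_contra hne
      have hh := MvPolynomial.mem_support_iff.mp hq
      rw [MvPolynomial.coeff_one] at hh
      simp [Ne.symm hne] at hh
    subst hq0
    simp
  | insert x s hx ih =>
    obtain ⟨ihd, ihc⟩ := ih (fun i hi => h i (Finset.mem_insert_of_mem hi))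
    have hfx := h x (Finset.mem_insert_self x s)
    rw [Finset.sum_insert hx, Finset.prod_insert hx, Finset.prod_insert hx]
    have := dom_mul hfx ihd
    exact ⟨this.1, by rw [this.2, ihc]⟩

end EigAux

end
noncomputable section
namespace EigAux

variable {n : ℕ}

lemma degree_eq_sum_univ (d : Fin n →₀ ℕ) : d.degree = ∑ i, d i :=
  Finset.sum_subset (Finset.subset_univ _)
    (fun _ _ hi => Finsupp.notMem_support_iff.mp hi)

variable {u : Matrix (Fin n) (Fin n) ℂ} {β : Fin n → ℂ}

lemma dom_base (hdiag : ∀ i, u i i = β i)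
    (htri : ∀ i j : Fin n, i < j → u i j = 0) (i : Fin n) :
    dom (Finsupp.single i 1) (∑ j, C (u i j) * X j) ∧
      coeff (Finsupp.single i 1) (∑ j, C (u i j) * X j) = β i := by
  classical
  have hco : ∀ q, coeff q (∑ j, C (u i j) * X j) =
      ∑ j, u i j * (if Finsupp.single j 1 = q then 1 else 0) := by
    intro q
    rw [MvPolynomial.coeff_sum]
    apply Finset.sum_congr rfl
    intro j _
    rw [MvPolynomial.coeff_C_mul, MvPolynomial.coeff_X']
  constructor
  · intro q hq
    have hne := MvPolynomial.mem_support_iff.mp hq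
    rw [hco] at hne
    obtain ⟨j, -, hj⟩ := Finset.exists_ne_zero_of_sum_ne_zero hne
    have hju : u i j ≠ 0 := fun h => by simp [h] at hj
    have hq' : Finsupp.single j 1 = q := by
      by_contra hcc; simp [hcc] at hj
    have hji : j ≤ i := by
      by_contra hlt
      exact hju (htri i j (lt_of_not_ge hlt))
    subst hq'
    refine ⟨?_, D_single_le hji⟩
    simp [Finsupp.single_apply]
  · rw [hco]
    rw [Finset.sum_eq_single i]
    · simp [hdiag i]
    · intro j _ hne
      have hns : ¬ Finsupp.single j (1:ℕ) = Finsupp.single i 1 := by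
        intro hc
        exact hne (Finsupp.single_left_injective one_ne_zero hc)
      simp [hns]
    · simp

lemma dom_key (hdiag : ∀ i, u i i = β i)
    (htri : ∀ i j : Fin n, i < j → u i j = 0) (m : Fin n →₀ ℕ) :
    dom m (aeval (fun i => ∑ j, C (u i j) * X j) (monomial m (1:ℂ))) ∧
      coeff m (aeval (fun i => ∑ j, C (u i j) * X j) (monomial m (1:ℂ)))
        = ∏ i, β i ^ m i := by
  set f : Fin n → MvPolynomial (Fin n) ℂ := fun i => ∑ j, C (u i j) * X j with hf
  have hT : aeval f (monomial m (1:ℂ)) = ∏ i, (f i) ^ m i := by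
    rw [MvPolynomial.aeval_monomial, map_one, one_mul]
    exact Finsupp.prod_fintype _ _ (fun i => pow_zero _)
  have hm : ∑ i, (m i) • Finsupp.single i (1:ℕ) = m := by
    have h1 : ∀ i : Fin n, (m i) • Finsupp.single i (1:ℕ) = Finsupp.single i (m i) := by
      intro i; rw [Finsupp.smul_single]; norm_num
    simp_rw [h1]
    exact Finsupp.univ_sum_single m
  have hprod := dom_prod Finset.univ (fun i => (m i) • Finsupp.single i (1:ℕ))
    (fun i => (f i) ^ (m i))
    (fun i _ => (dom_pow (dom_base hdiag htri i).1 (m i)).1)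
  rw [hm] at hprod
  rw [hT]
  refine ⟨hprod.1, hprod.2.trans ?_⟩
  apply Finset.prod_congr rfl
  intro i _
  have h2 := (dom_pow (dom_base hdiag htri i).1 (m i)).2
  rw [(dom_base hdiag htri i).2] at h2
  exact h2

end EigAux
end
noncomputable section
namespace EigAux

variable {n : ℕ} {u : Matrix (Fin n) (Fin n) ℂ} {β : Fin n → ℂ}

lemma coeff_aeval_eq_sum (P : MvPolynomial (Fin n) ℂ) (q : Fin n →₀ ℕ) :
    coeff q (aeval (fun i => ∑ j, C (u i j) * X j) P) =
      ∑ m ∈ P.support, coeff m P *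
        coeff q (aeval (fun i => ∑ j, C (u i j) * X j) (monomial m (1:ℂ))) := by
  conv_lhs => rw [P.as_sum]
  rw [map_sum, MvPolynomial.coeff_sum]
  apply Finset.sum_congr rfl
  intro m _
  have h1 : monomial m (coeff m P) = coeff m P • monomial m (1:ℂ) := by
    rw [MvPolynomial.smul_monomial, smul_eq_mul, mul_one]
  rw [h1, map_smul, MvPolynomial.coeff_smul, smul_eq_mul]

lemma forward (hdiag : ∀ i, u i i = β i)
    (htri : ∀ i j : Fin n, i < j → u i j = 0) {k : ℕ} {μ : ℂ}
    {P : MvPolynomial (Fin n) ℂ}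
    (hhom : P ∈ homogeneousSubmodule (Fin n) ℂ k) (hP : P ≠ 0)
    (heig : aeval (fun i => ∑ j, C (u i j) * X j) P = μ • P) :
    ∃ p : Fin n → ℕ, ∑ i, p i = k ∧ μ = bpow β p := by
  classical
  have hsupp : P.support.Nonempty := MvPolynomial.support_nonempty.mpr hP
  obtain ⟨p, hp, hmax⟩ := Finset.exists_max_image P.support D hsupp
  have hcp : coeff p P ≠ 0 := MvPolynomial.mem_support_iff.mp hp
  refine ⟨⇑p, ?_, ?_⟩
  · have hh : P.IsHomogeneous k := (mem_homogeneousSubmodule _ _).mp hhom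
    have := hh hcp
    rw [show (Finsupp.weight (1 : Fin n → ℕ)) = Finsupp.weight (fun _ => 1) from rfl,
      ← Finsupp.degree_eq_weight_one, degree_eq_sum_univ] at this
    exact this
  · have hL : coeff p (aeval (fun i => ∑ j, C (u i j) * X j) P)
        = coeff p P * ∏ i, β i ^ p i := by
      rw [coeff_aeval_eq_sum]
      rw [Finset.sum_eq_single p]
      · rw [(dom_key hdiag htri p).2]
      · intro m hm hne
        by_contra hc
        have hc2 : coeff p (aeval (fun i => ∑ j, C (u i j) * X j)
            (monomial m (1:ℂ))) ≠ 0 := fun h => hc (by rw [h, mul_zero])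
        have hmem := MvPolynomial.mem_support_iff.mpr hc2
        have hle := ((dom_key hdiag htri m).1 p hmem).2
        have heq : D m = D p := le_antisymm (hmax m hm) hle
        exact hne (D_inj heq)
      · intro h; exact absurd hp h
    rw [heig, MvPolynomial.coeff_smul, smul_eq_mul] at hL
    have h2 : coeff p P * μ = coeff p P * ∏ i, β i ^ p i := by
      rw [mul_comm μ (coeff p P)] at hL; exact hL
    have h3 := mul_left_cancel₀ hcp h2
    unfold bpow
    exact h3

end EigAux
end
noncomputable section
namespace EigAux

variable {n : ℕ}

/-- span of the monomials indexed by a finset of exponents -/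
def mspan (S : Finset (Fin n →₀ ℕ)) : Submodule ℂ (MvPolynomial (Fin n) ℂ) :=
  Submodule.span ℂ
    (Set.range (fun x : {x // x ∈ S} => monomial (x : Fin n →₀ ℕ) (1:ℂ)))

lemma monomial_li : LinearIndependent ℂ (fun m : Fin n →₀ ℕ => (monomial m (1:ℂ))) := by
  have h0 := (MvPolynomial.basisMonomials (Fin n) ℂ).linearIndependent
  rwa [MvPolynomial.coe_basisMonomials] at h0

lemma finrank_mspan (S : Finset (Fin n →₀ ℕ)) :
    Module.finrank ℂ (mspan S) = S.card := by
  have h1 : LinearIndependent ℂ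
      (fun x : {x // x ∈ S} => monomial (x : Fin n →₀ ℕ) (1:ℂ)) :=
    monomial_li.comp _ Subtype.val_injective
  rw [mspan, finrank_span_eq_card h1, Fintype.card_coe]

lemma mem_mspan {f : MvPolynomial (Fin n) ℂ} {S : Finset (Fin n →₀ ℕ)}
    (hS : f.support ⊆ S) : f ∈ mspan S := by
  rw [f.as_sum]
  apply Submodule.sum_mem
  intro m hm
  have h1 : monomial m (coeff m f) = coeff m f • monomial m (1:ℂ) := by
    rw [MvPolynomial.smul_monomial, smul_eq_mul, mul_one]
  rw [h1]
  exact Submodule.smul_mem _ _ (Submodule.subset_span ⟨⟨m, hS hm⟩, rfl⟩)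

lemma mspan_hom {k : ℕ} {S : Finset (Fin n →₀ ℕ)}
    (h : ∀ m ∈ S, ∑ i, m i = k) :
    mspan S ≤ homogeneousSubmodule (Fin n) ℂ k := by
  rw [mspan, Submodule.span_le]
  rintro y ⟨⟨m, hm⟩, rfl⟩
  rw [SetLike.mem_coe, mem_homogeneousSubmodule]
  apply MvPolynomial.isHomogeneous_monomial
  rw [degree_eq_sum_univ]
  exact h m hm

lemma mspan_fin (S : Finset (Fin n →₀ ℕ)) : FiniteDimensional ℂ (mspan S) := by
  rw [mspan]
  exact FiniteDimensional.span_of_finite ℂ (Set.finite_range _)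

lemma exists_ker {E : Type*} [AddCommGroup E] [Module ℂ E]
    (M : E →ₗ[ℂ] E) (W W' : Submodule ℂ E) [FiniteDimensional ℂ W']
    (hmaps : ∀ x ∈ W, M x ∈ W')
    (hr : Module.finrank ℂ W' < Module.finrank ℂ W) :
    ∃ x, x ∈ W ∧ x ≠ 0 ∧ M x = 0 := by
  set gres : W →ₗ[ℂ] W' := M.restrict hmaps with hgres
  have hninj : ¬ Function.Injective gres := by
    intro hinj
    have h3 := LinearMap.finrank_le_finrank_of_injective hinj
    omega
  have hker : LinearMap.ker gres ≠ ⊥ := fun h => hninj (LinearMap.ker_eq_bot.mp h)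
  obtain ⟨x, hxk, hx0⟩ := (Submodule.ne_bot_iff _).mp hker
  refine ⟨(x : E), x.2, ?_, ?_⟩
  · intro h
    exact hx0 (Subtype.ext h)
  · have h5 : (gres x : E) = M (x : E) := LinearMap.restrict_coe_apply M hmaps x
    rw [LinearMap.mem_ker] at hxk
    rw [hxk] at h5
    simpa using h5.symm

variable {u : Matrix (Fin n) (Fin n) ℂ} {β : Fin n → ℂ}

set_option maxHeartbeats 1000000 in
lemma backward (hdiag : ∀ i, u i i = β i)
    (htri : ∀ i j : Fin n, i < j → u i j = 0) {k : ℕ} (p : Fin n → ℕ)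
    (hpk : ∑ i, p i = k) :
    ∃ P : MvPolynomial (Fin n) ℂ, P ∈ homogeneousSubmodule (Fin n) ℂ k ∧ P ≠ 0 ∧
      aeval (fun i => ∑ j, C (u i j) * X j) P = (bpow β p) • P := by
  classical
  set pf : Fin n →₀ ℕ := Finsupp.equivFunOnFinite.symm p with hpfdef
  have hpf : ⇑pf = p := rfl
  set SF : Finset (Fin n →₀ ℕ) :=
    (Finset.finsuppAntidiag Finset.univ k).filter (fun m => D m ≤ D pf) with hSF
  have hSFmem : ∀ m : Fin n →₀ ℕ, m ∈ SF ↔ ((∑ i, m i = k) ∧ D m ≤ D pf) := by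
    intro m
    rw [hSF, Finset.mem_filter, Finset.mem_finsuppAntidiag]
    constructor
    · rintro ⟨⟨h1, -⟩, h2⟩; exact ⟨h1, h2⟩
    · rintro ⟨h1, h2⟩; exact ⟨⟨h1, Finset.subset_univ _⟩, h2⟩
  have hpSF : pf ∈ SF := (hSFmem pf).mpr ⟨by rw [hpf]; exact hpk, le_refl _⟩
  set SF' : Finset (Fin n →₀ ℕ) := SF.erase pf with hSF'
  set M : MvPolynomial (Fin n) ℂ →ₗ[ℂ] MvPolynomial (Fin n) ℂ :=
    (aeval (fun i => ∑ j, C (u i j) * X j)).toLinearMap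
      - (bpow β p) • LinearMap.id with hM
  have hMapp : ∀ f, M f = aeval (fun i => ∑ j, C (u i j) * X j) f - (bpow β p) • f := by
    intro f
    rw [hM, LinearMap.sub_apply, LinearMap.smul_apply, LinearMap.id_apply,
      AlgHom.toLinearMap_apply]
  have hgen : ∀ m ∈ SF, M (monomial m (1:ℂ)) ∈ mspan SF' := by
    intro m hm
    apply mem_mspan
    intro q hq
    rw [MvPolynomial.mem_support_iff, hMapp] at hq
    rw [MvPolynomial.coeff_sub, MvPolynomial.coeff_smul, smul_eq_mul,
      MvPolynomial.coeff_monomial] at hq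
    rw [hSF', Finset.mem_erase]
    obtain ⟨hmk, hmle⟩ := (hSFmem m).mp hm
    by_cases hqm : q = m
    · by_cases hqpf : m = pf
      · exfalso
        rw [hqm, hqpf] at hq
        rw [if_pos rfl, mul_one, (dom_key hdiag htri pf).2] at hq
        apply hq
        rw [sub_eq_zero]
        rfl
      · rw [hqm]
        exact ⟨hqpf, hm⟩
    · rw [if_neg (fun h => hqm h.symm), mul_zero, sub_zero] at hq
      have hqsupp := MvPolynomial.mem_support_iff.mpr hq
      obtain ⟨hdeg, hle⟩ := (dom_key hdiag htri m).1 q hqsupp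
      have hqSF : q ∈ SF := (hSFmem q).mpr ⟨hdeg.trans hmk, hle.trans hmle⟩
      refine ⟨?_, hqSF⟩
      intro hqpf
      subst hqpf
      exact hqm (D_inj (le_antisymm hmle hle)).symm
  have hmaps : ∀ x ∈ mspan SF, M x ∈ mspan SF' := by
    have hle : mspan SF ≤ Submodule.comap M (mspan SF') := by
      rw [mspan, Submodule.span_le]
      rintro y ⟨⟨m, hm⟩, rfl⟩
      exact hgen m hm
    exact fun x hx => hle hx
  have hfin : FiniteDimensional ℂ (mspan SF') := mspan_fin SF'
  have hr : Module.finrank ℂ (mspan SF') < Module.finrank ℂ (mspan SF) := by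
    rw [finrank_mspan, finrank_mspan]
    exact Finset.card_erase_lt_of_mem hpSF
  obtain ⟨x, hxW, hx0, hxM⟩ := exists_ker M _ _ hmaps hr
  refine ⟨x, ?_, hx0, ?_⟩
  · exact mspan_hom (fun m hm => ((hSFmem m).mp hm).1) hxW
  · rw [hMapp] at hxM
    rw [sub_eq_zero] at hxM
    exact hxM

end EigAux
end


/-- let `u₀` be a lower-triangular invertible linear map of ℂⁿ
with diagonal entries `β₁, ..., βₙ`. The eigenvalues of `P ↦ P ∘ u₀` on the
space of homogeneous polynomials of degree `k` in `n` variables are exactly the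
products `β^p` with `|p| = k`. -/
theorem eigenvalues_of_composition_on_homogeneous {n k : ℕ} (β : Fin n → ℂ)
    (hβ : ∀ i, β i ≠ 0) (u : Matrix (Fin n) (Fin n) ℂ)
    (hdiag : ∀ i, u i i = β i)
    (htri : ∀ i j : Fin n, i < j → u i j = 0) :
    ∀ μ : ℂ,
      (∃ P : MvPolynomial (Fin n) ℂ,
          P ∈ homogeneousSubmodule (Fin n) ℂ k ∧ P ≠ 0 ∧
          aeval (fun i => ∑ j, MvPolynomial.C (u i j) * MvPolynomial.X j) P
            = μ • P) ↔
      ∃ p : Fin n → ℕ, ∑ i, p i = k ∧ μ = bpow β p := by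
  intro μ
  constructor
  · rintro ⟨P, h1, h2, h3⟩
    exact EigAux.forward hdiag htri h1 h2 h3
  · rintro ⟨p, hpk, rfl⟩
    exact EigAux.backward hdiag htri p hpk
end
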